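/- Let K be a field of characteristic 0 and O_v a valuation subring of K whose residue field has characteristic p > 0 (i.e. p lies in the maximal ideal of O_v). Let v : K× → K×/O_v× =: vK be the associated valuation into its linearly ordered value group. If the set {g ∈ vK : 0 ≤ g ≤ v(p)} is finite, then for every valuation subring O of K with O_v ⊊ O, the residue field of O has characteristic 0 (equivalently, p does not lie in the maximal ideal of O). -/

import Mathlib

/-- Let `K` be a field of characteristic `0` and `O_v` a valuation subring of `K`
whose residue field has characteristic `p > 0` (i.e. `p` lies in the maximal ideal
of `O_v`).  The value group `vK` is `K^×/O_v^×`, where `v(x) ≥ 0` iff `x ∈ O_v`, so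
that an element `g` of the value group satisfies `0 ≤ g ≤ v(p)` iff `g = v(x)` for
some `x ∈ K^×` with `x ∈ O_v` and `p/x ∈ O_v`.  If the set of such `g` is finite
(i.e. `(K, O_v)` is finitely ramified), then for every valuation subring `O` of `K`
with `O_v ⊊ O` (i.e. every proper coarsening of `O_v`), the residue field of `O` has
characteristic `0`. -/
theorem residue_charZero_of_proper_coarsening_of_finitely_ramified
    {K : Type*} [Field K] [CharZero K] (Ov : ValuationSubring K)
    (p : ℕ) (hp : p.Prime)
    (hpm : (p : Ov) ∈ IsLocalRing.maximalIdeal Ov)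
    (hfin : {g : Kˣ ⧸ Ov.unitGroup | ∃ x : Kˣ, QuotientGroup.mk x = g ∧
      (x : K) ∈ Ov ∧ (p : K) / (x : K) ∈ Ov}.Finite) :
    ∀ O : ValuationSubring K, Ov < O →
      CharZero (IsLocalRing.ResidueField O) := by
  intro O hO
  have hpK : (p : K) ≠ 0 := Nat.cast_ne_zero.mpr hp.ne_zero
  obtain ⟨y, hyO, hyv⟩ := SetLike.exists_of_lt hO
  have hy0 : y ≠ 0 := by rintro rfl; exact hyv (zero_mem _)
  have htOv : y⁻¹ ∈ Ov := (Ov.mem_or_inv_mem y).resolve_left hyv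
  have ht0 : y⁻¹ ≠ 0 := inv_ne_zero hy0
  -- y⁻¹ is in the maximal ideal of Ov
  have htm : (⟨y⁻¹, htOv⟩ : Ov) ∈ IsLocalRing.maximalIdeal Ov := by
    rw [IsLocalRing.mem_maximalIdeal, mem_nonunits_iff]
    intro hu
    rw [ValuationSubring.valuation_eq_one_iff] at hu
    apply hyv
    apply Ov.mem_of_valuation_le_one
    have hv : Ov.valuation y⁻¹ = 1 := hu
    rw [map_inv₀] at hv
    rw [← inv_inv (Ov.valuation y), hv, inv_one]
  -- p⁻¹ ∈ O
  have hpinv : (p : K)⁻¹ ∈ O := by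
    by_cases hcase : ∀ n : ℕ, (p : K) / (y⁻¹) ^ n ∈ Ov
    · exfalso
      set tu : Kˣ := Units.mk0 y⁻¹ ht0 with htu
      have htuK : ∀ n : ℕ, ((tu ^ n : Kˣ) : K) = (y⁻¹) ^ n := by
        intro n; simp [htu]
      have key : ∀ n m : ℕ, n < m →
          (QuotientGroup.mk (tu ^ n) : Kˣ ⧸ Ov.unitGroup) ≠ QuotientGroup.mk (tu ^ m) := by
        intro n m hnm h
        rw [QuotientGroup.eq] at h
        have hmem : tu ^ (m - n) ∈ Ov.unitGroup := by
          have he : (tu ^ n)⁻¹ * tu ^ m = tu ^ (m - n) := by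
            rw [show m = n + (m - n) by omega, pow_add, inv_mul_cancel_left,
              Nat.add_sub_cancel_left]
          rwa [he] at h
        -- so (y⁻¹)^(m-n) is a unit of Ov
        have hpowOv : (y⁻¹) ^ (m - n) ∈ Ov := pow_mem htOv _
        have hunit : IsUnit (⟨(y⁻¹) ^ (m - n), hpowOv⟩ : Ov) := by
          rw [ValuationSubring.valuation_eq_one_iff]
          have : Ov.valuation ((tu ^ (m - n) : Kˣ) : K) = 1 := hmem
          rwa [htuK] at this
        -- but (y⁻¹)^(m-n) is in the maximal ideal
        have hk : 0 < m - n := Nat.sub_pos_of_lt hnm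
        have hmemMax : (⟨(y⁻¹) ^ (m - n), hpowOv⟩ : Ov) ∈ IsLocalRing.maximalIdeal Ov := by
          have he2 : (⟨(y⁻¹) ^ (m - n), hpowOv⟩ : Ov) =
              (⟨(y⁻¹) ^ (m - n - 1), pow_mem htOv _⟩ : Ov) * ⟨y⁻¹, htOv⟩ := by
            ext
            push_cast
            rw [← pow_succ, Nat.sub_add_cancel hk]
          rw [he2]
          exact Ideal.mul_mem_left _ _ htm
        exact (IsLocalRing.mem_maximalIdeal _).mp hmemMax hunit
      apply Set.infinite_of_injective_forall_mem
        (f := fun n : ℕ => (QuotientGroup.mk (tu ^ n) : Kˣ ⧸ Ov.unitGroup)) ?_ ?_ hfin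
      · intro n m h
        by_contra hne
        rcases Nat.lt_or_ge n m with h1 | h1
        · exact key n m h1 h
        · exact key m n (lt_of_le_of_ne h1 (Ne.symm hne)) h.symm
      · intro n
        refine ⟨tu ^ n, rfl, ?_, ?_⟩
        · rw [htuK]; exact pow_mem htOv n
        · rw [htuK]; exact hcase n
    · push_neg at hcase
      obtain ⟨n, hn⟩ := hcase
      have h1 : ((p : K) / (y⁻¹) ^ n)⁻¹ ∈ Ov := (Ov.mem_or_inv_mem _).resolve_left hn
      have heq : (p : K)⁻¹ = ((p : K) / (y⁻¹) ^ n)⁻¹ * y ^ n := by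
        field_simp
        rw [one_div, inv_pow, inv_mul_cancel₀ (pow_ne_zero _ hy0)]
      rw [heq]
      exact mul_mem (hO.le h1) (pow_mem hyO n)
  -- p is a unit of O
  have hpunit : IsUnit ((p : ℕ) : O) := by
    refine IsUnit.of_mul_eq_one ⟨(p : K)⁻¹, hpinv⟩ ?_
    ext
    push_cast
    exact mul_inv_cancel₀ hpK
  -- residue field characteristic
  rcases CharP.char_is_prime_or_zero (IsLocalRing.ResidueField O)
      (ringChar (IsLocalRing.ResidueField O)) with hq | hq
  · exfalso
    set q := ringChar (IsLocalRing.ResidueField O) with hqdef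
    have hq0 : ((q : ℕ) : IsLocalRing.ResidueField O) = 0 := ringChar.Nat.cast_ringChar
    have hqm : ((q : ℕ) : O) ∈ IsLocalRing.maximalIdeal O := by
      have h0 : IsLocalRing.residue O ((q : ℕ) : O) = 0 := by
        rw [map_natCast]; exact hq0
      exact (Ideal.Quotient.eq_zero_iff_mem).mp h0
    by_cases hqp : q = p
    · rw [hqp] at hqm
      exact (IsLocalRing.mem_maximalIdeal _).mp hqm hpunit
    · -- q is in the maximal ideal of Ov too
      have hqOvm : ((q : ℕ) : Ov) ∈ IsLocalRing.maximalIdeal Ov := by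
        rw [IsLocalRing.mem_maximalIdeal, mem_nonunits_iff]
        intro hu
        obtain ⟨u, hu⟩ := hu
        apply (IsLocalRing.mem_maximalIdeal _).mp hqm
        refine IsUnit.of_mul_eq_one ⟨(((u⁻¹ : Ovˣ) : Ov) : K), hO.le (SetLike.coe_mem _)⟩ ?_
        have h1 : (((u : Ov) : K)) * (((u⁻¹ : Ovˣ) : Ov) : K) = 1 := by
          exact_mod_cast congrArg (Subtype.val) u.mul_inv
        rw [hu] at h1
        ext
        push_cast
        push_cast at h1
        exact h1
      -- Bezout: 1 = a * p + b * q, so 1 ∈ maximal ideal, contradiction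
      have hcop : Nat.Coprime p q := (Nat.coprime_primes hp hq).mpr (Ne.symm hqp)
      have hbez : (1 : ℤ) = p * Nat.gcdA p q + q * Nat.gcdB p q := by
        have := Nat.gcd_eq_gcd_ab p q
        rwa [hcop] at this
      have h1mem : (1 : Ov) ∈ IsLocalRing.maximalIdeal Ov := by
        have hcast : (1 : Ov) = (p : Ov) * ((Nat.gcdA p q : ℤ) : Ov)
            + ((q : ℕ) : Ov) * ((Nat.gcdB p q : ℤ) : Ov) := by
          have := congrArg (fun z : ℤ => ((z : ℤ) : Ov)) hbez
          push_cast at this ⊢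
          exact this
        rw [hcast]
        exact Ideal.add_mem _ (Ideal.mul_mem_right _ _ hpm) (Ideal.mul_mem_right _ _ hqOvm)
      exact (IsLocalRing.maximalIdeal.isMaximal Ov).ne_top
        ((Ideal.eq_top_iff_one _).mpr h1mem)
  · have : CharP (IsLocalRing.ResidueField O) 0 := by rw [← hq]; exact ringChar.charP _
    exact CharP.charP_to_charZero _
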